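/- The spectrum of the discrete Dirichlet Laplacian h₊ on ℓ²(ℕ) is exactly the interval [-2,2], and h₊ has no eigenvalues (its spectrum is purely continuous). -/

import Mathlib

open scoped ENNReal ComplexConjugate InnerProductSpace
open Filter Topology

noncomputable abbrev L2 := lp (fun _ : ℕ => ℂ) 2

namespace Stmt4Aux


noncomputable def mk2 (f : ℕ → ℂ) (hf : Memℓp f 2) : L2 := ⟨f, hf⟩

@[simp] lemma mk2_apply (f : ℕ → ℂ) (hf : Memℓp f 2) (n : ℕ) :
    (mk2 f hf : ∀ _ : ℕ, ℂ) n = f n := rfl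

lemma sq_summable (u : L2) : Summable (fun n => ‖(u : ∀ _ : ℕ, ℂ) n‖ ^ (2:ℝ)) := by
  have := lp.memℓp u
  rw [memℓp_gen_iff (by norm_num : 0 < (2:ℝ≥0∞).toReal)] at this
  simpa using this

lemma norm_sq_eq (u : L2) : ‖u‖ ^ (2:ℝ) = ∑' n, ‖(u : ∀ _ : ℕ, ℂ) n‖ ^ (2:ℝ) := by
  simpa using lp.norm_rpow_eq_tsum (by norm_num : 0 < (2:ℝ≥0∞).toReal) u

/-- the down-shift `Au n = u (n+1)` as an element of ℓ². -/
noncomputable def A (u : L2) : L2 :=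
  mk2 (fun n => (u : ∀ _ : ℕ, ℂ) (n+1)) (by
    apply memℓp_gen
    have : Summable ((fun n => ‖(u : ∀ _ : ℕ, ℂ) n‖ ^ (2:ℝ)) ∘ (fun n => n + 1)) :=
      (sq_summable u).comp_injective (add_left_injective 1)
    simpa [Function.comp_def] using this)

/-- padded sequence: 0, u 0, u 1, ... -/
def pad (u : L2) : ℕ → ℂ := fun n => match n with
  | 0 => 0
  | (m+1) => (u : ∀ _ : ℕ, ℂ) m

noncomputable def B (u : L2) : L2 :=
  mk2 (pad u) (by
    apply memℓp_gen
    apply (summable_nat_add_iff 1).mp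
    simpa [pad] using sq_summable u)

lemma A_apply (u : L2) (n : ℕ) : (A u : ∀ _ : ℕ, ℂ) n = (u : ∀ _ : ℕ, ℂ) (n+1) := rfl
lemma B_apply_zero (u : L2) : (B u : ∀ _ : ℕ, ℂ) 0 = 0 := rfl
lemma B_apply_succ (u : L2) (n : ℕ) : (B u : ∀ _ : ℕ, ℂ) (n+1) = (u : ∀ _ : ℕ, ℂ) n := rfl

lemma le_of_rpow2 {x y : ℝ} (hx : 0 ≤ x) (hy : 0 ≤ y) (h : x ^ (2:ℝ) ≤ y ^ (2:ℝ)) :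
    x ≤ y := by
  rw [show (2:ℝ) = ((2:ℕ):ℝ) by norm_num, Real.rpow_natCast, Real.rpow_natCast] at h
  nlinarith

lemma norm_A_le (u : L2) : ‖A u‖ ≤ ‖u‖ := by
  have h2 : ‖A u‖ ^ (2:ℝ) ≤ ‖u‖ ^ (2:ℝ) := by
    rw [norm_sq_eq, norm_sq_eq]
    refine Summable.tsum_le_tsum_of_inj (fun n => n + 1) (add_left_injective 1)
      (fun c _ => by positivity) (fun n => le_of_eq rfl) ?_ (sq_summable u)
    have : Summable ((fun n => ‖(u : ∀ _ : ℕ, ℂ) n‖ ^ (2:ℝ)) ∘ (fun n => n + 1)) :=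
      (sq_summable u).comp_injective (add_left_injective 1)
    simpa [A, Function.comp_def] using this
  exact le_of_rpow2 (norm_nonneg _) (norm_nonneg _) h2

lemma norm_B_le (u : L2) : ‖B u‖ ≤ ‖u‖ := by
  have h2 : ‖B u‖ ^ (2:ℝ) ≤ ‖u‖ ^ (2:ℝ) := by
    rw [norm_sq_eq, norm_sq_eq]
    rw [Summable.tsum_eq_zero_add]
    · simp [B_apply_zero, B_apply_succ]
    · apply memℓp_gen_iff (by norm_num : 0 < (2:ℝ≥0∞).toReal) |>.mp
      exact lp.memℓp (B u)
  exact le_of_rpow2 (norm_nonneg _) (norm_nonneg _) h2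

section Op
variable (H : L2 →L[ℂ] L2)
    (hH0 : ∀ u : L2, (H u : ∀ _ : ℕ, ℂ) 0 = (u : ∀ _ : ℕ, ℂ) 1)
    (hHn : ∀ u : L2, ∀ n : ℕ,
      (H u : ∀ _ : ℕ, ℂ) (n + 1) = (u : ∀ _ : ℕ, ℂ) (n + 2) + (u : ∀ _ : ℕ, ℂ) n)

include hH0 hHn

lemma H_eq (u : L2) : H u = A u + B u := by
  apply lp.ext; funext n
  rw [lp.coeFn_add]
  match n with
  | 0 => simp [hH0 u, A_apply, B_apply_zero]
  | (m+1) => simp [hHn u m, A_apply, B_apply_succ]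

lemma norm_H_le (u : L2) : ‖H u‖ ≤ 2 * ‖u‖ := by
  rw [H_eq H hH0 hHn u]
  calc ‖A u + B u‖ ≤ ‖A u‖ + ‖B u‖ := norm_add_le _ _
    _ ≤ ‖u‖ + ‖u‖ := add_le_add (norm_A_le u) (norm_B_le u)
    _ = 2 * ‖u‖ := by ring

omit hH0 hHn in
lemma inner_A_eq (u v : L2) : ⟪A u, v⟫_ℂ = ⟪u, B v⟫_ℂ := by
  have hsum : Summable (fun n => conj ((u : ∀ _:ℕ, ℂ) n) * (B v : ∀ _:ℕ, ℂ) n) := by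
    simpa [RCLike.inner_apply', mul_comm] using lp.summable_inner (𝕜 := ℂ) u (B v)
  have h1 : ⟪A u, v⟫_ℂ = ∑' n, conj ((u : ∀ _:ℕ, ℂ) (n+1)) * (v : ∀ _:ℕ, ℂ) n := by
    rw [lp.inner_eq_tsum]; simp only [RCLike.inner_apply', A_apply]
  have h2 : ⟪u, B v⟫_ℂ = ∑' n, conj ((u : ∀ _:ℕ, ℂ) n) * (B v : ∀ _:ℕ, ℂ) n := by
    rw [lp.inner_eq_tsum]; simp only [RCLike.inner_apply']
  rw [h1, h2, Summable.tsum_eq_zero_add hsum]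
  simp [B_apply_zero, B_apply_succ]

omit hH0 hHn in
lemma inner_B_eq (u v : L2) : ⟪B u, v⟫_ℂ = ⟪u, A v⟫_ℂ := by
  have hsum : Summable (fun n => conj ((B u : ∀ _:ℕ, ℂ) n) * (v : ∀ _:ℕ, ℂ) n) := by
    simpa [RCLike.inner_apply', mul_comm] using lp.summable_inner (𝕜 := ℂ) (B u) v
  have h1 : ⟪B u, v⟫_ℂ = ∑' n, conj ((B u : ∀ _:ℕ, ℂ) n) * (v : ∀ _:ℕ, ℂ) n := by
    rw [lp.inner_eq_tsum]; simp only [RCLike.inner_apply']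
  have h2 : ⟪u, A v⟫_ℂ = ∑' n, conj ((u : ∀ _:ℕ, ℂ) n) * (v : ∀ _:ℕ, ℂ) (n+1) := by
    rw [lp.inner_eq_tsum]; simp only [RCLike.inner_apply', A_apply]
  rw [h1, h2, Summable.tsum_eq_zero_add hsum]
  simp [B_apply_zero, B_apply_succ]

lemma H_selfAdjoint : IsSelfAdjoint H := by
  rw [ContinuousLinearMap.isSelfAdjoint_iff_isSymmetric]
  intro u v
  show ⟪H u, v⟫_ℂ = ⟪u, H v⟫_ℂ
  rw [H_eq H hH0 hHn u, H_eq H hH0 hHn v, inner_add_left, inner_add_right,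
    inner_A_eq, inner_B_eq]
  ring

end Op



noncomputable def S (z : ℂ) : ℕ → ℂ
  | 0 => 1
  | 1 => z
  | (n+2) => z * S z (n+1) - S z n

lemma S_identity (z : ℂ) : ∀ n : ℕ, S z (n+1) * S z (n+1) - S z (n+2) * S z n = 1 := by
  intro n
  induction n with
  | zero => simp [S]
  | succ m ih =>
    have h2 : S z (m+3) = z * S z (m+2) - S z (m+1) := rfl
    have h1 : S z (m+2) = z * S z (m+1) - S z m := rfl
    calc S z (m+2) * S z (m+2) - S z (m+3) * S z (m+1)
        = S z (m+1) * S z (m+1) - S z (m+2) * S z m := by rw [h2, h1]; ring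
      _ = 1 := ih

lemma no_eigen (H : L2 →L[ℂ] L2)
    (hH0 : ∀ u : L2, (H u : ∀ _ : ℕ, ℂ) 0 = (u : ∀ _ : ℕ, ℂ) 1)
    (hHn : ∀ u : L2, ∀ n : ℕ,
      (H u : ∀ _ : ℕ, ℂ) (n + 1) = (u : ∀ _ : ℕ, ℂ) (n + 2) + (u : ∀ _ : ℕ, ℂ) n)
    (z : ℂ) (u : L2) (h : H u = z • u) : u = 0 := by
  set f : ℕ → ℂ := fun n => (u : ∀ _ : ℕ, ℂ) n with hf
  have hz0 : f 1 = z * f 0 := by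
    have := hH0 u
    rw [h] at this
    simpa [lp.coeFn_smul, hf] using this.symm
  have hrec : ∀ n : ℕ, f (n+2) = z * f (n+1) - f n := by
    intro n
    have := hHn u n
    rw [h] at this
    simp only [lp.coeFn_smul, Pi.smul_apply, smul_eq_mul] at this
    have : z * f (n+1) = f (n+2) + f n := this
    linear_combination -this
  have key : ∀ n : ℕ, f n = f 0 * S z n := by
    have key2 : ∀ n : ℕ, f n = f 0 * S z n ∧ f (n+1) = f 0 * S z (n+1) := by
      intro n
      induction n with
      | zero => exact ⟨by simp [S], by simp [S, hz0, mul_comm]⟩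
      | succ m ih =>
        refine ⟨ih.2, ?_⟩
        have : S z (m+2) = z * S z (m+1) - S z m := rfl
        rw [hrec m, ih.1, ih.2, this]; ring
    exact fun n => (key2 n).1
  by_cases h0 : f 0 = 0
  · apply lp.ext; funext n
    have := key n
    rw [h0, zero_mul] at this
    simpa [hf] using this
  · exfalso
    have hten : Tendsto f atTop (nhds 0) := by
      have h1 : Tendsto (fun n => ‖f n‖ ^ (2:ℝ)) atTop (nhds 0) := by
        have := lp.memℓp u
        rw [memℓp_gen_iff (by norm_num : 0 < (2:ℝ≥0∞).toReal)] at this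
        exact ((by simpa using this : Summable fun n => ‖f n‖ ^ (2:ℝ))).tendsto_atTop_zero
      rw [tendsto_zero_iff_norm_tendsto_zero]
      have h2 : Tendsto (fun n => (‖f n‖ ^ (2:ℝ)) ^ ((2:ℝ)⁻¹)) atTop (nhds 0) := by
        simpa using h1.rpow_const (p := (2:ℝ)⁻¹) (Or.inr (by norm_num))
      convert h2 using 2 with n
      rw [← Real.rpow_mul (norm_nonneg _), mul_inv_cancel₀ (by norm_num : (2:ℝ) ≠ 0),
        Real.rpow_one]
    have hS : Tendsto (fun n => S z n) atTop (nhds 0) := by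
      have : Tendsto (fun n => (f 0)⁻¹ * f n) atTop (nhds ((f 0)⁻¹ * 0)) :=
        hten.const_mul _
      simp only [mul_zero] at this
      convert this using 2 with n
      rw [key n]; field_simp
    have hlim : Tendsto (fun n => S z (n+1) * S z (n+1) - S z (n+2) * S z n)
        atTop (nhds 0) := by
      have t1 := (hS.comp (tendsto_add_atTop_nat 1))
      have t2 := (hS.comp (tendsto_add_atTop_nat 2))
      have := (t1.mul t1).sub (t2.mul hS)
      simpa using this
    have : (1:ℂ) = 0 := tendsto_nhds_unique
      (by simpa [S_identity z] using (tendsto_const_nhds :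
        Tendsto (fun _ : ℕ => (1:ℂ)) atTop (nhds 1))) hlim
    simp at this


noncomputable def e (i : ℕ) : L2 := lp.single 2 i (1:ℂ)

lemma e_apply (i n : ℕ) : (e i : ∀ _ : ℕ, ℂ) n = if n = i then 1 else 0 := by
  rcases eq_or_ne n i with h | h
  · subst h; simp [e, lp.single_apply_self]
  · simp [e, lp.single_apply_ne _ _ _ h, h]

lemma norm_e (i : ℕ) : ‖e i‖ = 1 := by
  have := lp.norm_single (p := 2) (E := fun _ : ℕ => ℂ) (by norm_num)
    i (1:ℂ)
  simpa [e] using this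

section Weyl
variable (θ : ℝ)

noncomputable def w (N : ℕ) : ℕ → ℂ := fun n =>
  if n < N then (Real.sin ((n+1)*θ) : ℂ) else 0

lemma w_memℓp (N : ℕ) : Memℓp (w θ N) 2 := by
  apply memℓp_gen
  apply summable_of_ne_finset_zero (s := Finset.range N)
  intro n hn
  rw [Finset.mem_range] at hn
  simp [w, hn, Real.zero_rpow (by norm_num : (2:ℝ) ≠ 0)]

noncomputable def W (N : ℕ) : L2 := mk2 (w θ N) (w_memℓp θ N)

lemma W_apply (N n : ℕ) : (W θ N : ∀ _ : ℕ, ℂ) n = w θ N n := rfl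

lemma trig (a : ℝ) : Real.sin (a + θ) + Real.sin (a - θ) = 2 * Real.cos θ * Real.sin a := by
  rw [Real.sin_add, Real.sin_sub]; ring

lemma ctrig (k : ℂ) : 2 * Complex.cos (θ:ℂ) * Complex.sin ((k+1) * (θ:ℂ)) =
    Complex.sin ((k+1+1)*(θ:ℂ)) + Complex.sin (k*(θ:ℂ)) := by
  rw [show (k+1+1)*(θ:ℂ) = (k+1)*θ + θ by ring, show k*(θ:ℂ) = (k+1)*θ - θ by ring,
    Complex.sin_add, Complex.sin_sub]
  ring

lemma resid (H : L2 →L[ℂ] L2)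
    (hH0 : ∀ u : L2, (H u : ∀ _ : ℕ, ℂ) 0 = (u : ∀ _ : ℕ, ℂ) 1)
    (hHn : ∀ u : L2, ∀ n : ℕ,
      (H u : ∀ _ : ℕ, ℂ) (n + 1) = (u : ∀ _ : ℕ, ℂ) (n + 2) + (u : ∀ _ : ℕ, ℂ) n)
    (M : ℕ) :
    ((2 * Real.cos θ : ℝ) : ℂ) • W θ (M+1) - H (W θ (M+1)) =
      ((Real.sin ((M+2)*θ) : ℝ) : ℂ) • e M
      - ((Real.sin ((M+1)*θ) : ℝ) : ℂ) • e (M+1) := by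
  apply lp.ext; funext n
  simp only [lp.coeFn_sub, lp.coeFn_smul, Pi.sub_apply, Pi.smul_apply, smul_eq_mul]
  match n with
  | 0 =>
    rw [hH0, W_apply, W_apply, e_apply, e_apply]
    simp only [w]
    match M with
    | 0 =>
      rw [if_pos (by omega : (0:ℕ) < 0+1), if_neg (by omega : ¬ (1:ℕ) < 0+1),
        if_pos rfl, if_neg (by omega : (0:ℕ) ≠ 0+1)]
      push_cast
      linear_combination (norm := ring_nf) ctrig θ 0
      simp
    | (K+1) =>
      rw [if_pos (by omega : (0:ℕ) < K+1+1), if_pos (by omega : (1:ℕ) < K+1+1),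
        if_neg (by omega : (0:ℕ) ≠ K+1), if_neg (by omega : (0:ℕ) ≠ K+1+1)]
      push_cast
      linear_combination (norm := ring_nf) ctrig θ 0
      simp
  | (m+1) =>
    rw [hHn, W_apply, W_apply, W_apply, e_apply, e_apply]
    simp only [w]
    rcases Nat.lt_or_ge (m+1) M with hc | hc
    · -- interior
      rw [if_pos (by omega : m+1 < M+1), if_pos (by omega : m+2 < M+1),
        if_pos (by omega : m < M+1), if_neg (by omega : m+1 ≠ M),
        if_neg (by omega : m+1 ≠ M+1)]
      push_cast
      linear_combination (norm := ring_nf) ctrig θ (m+1)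
    rcases Nat.eq_or_lt_of_le hc with hc2 | hc2
    · -- m+1 = M
      obtain rfl : M = m+1 := hc2
      rw [if_pos (by omega : m+1 < m+1+1), if_neg (by omega : ¬ m+2 < m+1+1),
        if_pos (by omega : m < m+1+1), if_pos rfl, if_neg (by omega : m+1 ≠ m+1+1)]
      push_cast
      linear_combination (norm := ring_nf) ctrig θ (m+1)
    rcases Nat.eq_or_lt_of_le hc2 with hc3 | hc3
    · -- m = M
      obtain rfl : M = m := by omega
      rw [if_neg (by omega : ¬ M+1 < M+1), if_neg (by omega : ¬ M+2 < M+1),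
        if_pos (by omega : M < M+1), if_neg (by omega : M+1 ≠ M), if_pos rfl]
      push_cast
      ring
    · -- m > M
      rw [if_neg (by omega : ¬ m+1 < M+1), if_neg (by omega : ¬ m+2 < M+1),
        if_neg (by omega : ¬ m < M+1), if_neg (by omega : m+1 ≠ M),
        if_neg (by omega : m+1 ≠ M+1)]
      push_cast
      ring

lemma resid_norm_le (H : L2 →L[ℂ] L2)
    (hH0 : ∀ u : L2, (H u : ∀ _ : ℕ, ℂ) 0 = (u : ∀ _ : ℕ, ℂ) 1)
    (hHn : ∀ u : L2, ∀ n : ℕ,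
      (H u : ∀ _ : ℕ, ℂ) (n + 1) = (u : ∀ _ : ℕ, ℂ) (n + 2) + (u : ∀ _ : ℕ, ℂ) n)
    (M : ℕ) :
    ‖((2 * Real.cos θ : ℝ) : ℂ) • W θ (M+1) - H (W θ (M+1))‖ ≤ 2 := by
  rw [resid θ H hH0 hHn M]
  calc ‖((Real.sin ((M+2)*θ) : ℝ) : ℂ) • e M - ((Real.sin ((M+1)*θ) : ℝ) : ℂ) • e (M+1)‖
      ≤ ‖((Real.sin ((M+2)*θ) : ℝ) : ℂ) • e M‖ + ‖((Real.sin ((M+1)*θ) : ℝ) : ℂ) • e (M+1)‖ :=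
        norm_sub_le _ _
    _ ≤ 1 + 1 := by
        apply add_le_add
        · rw [norm_smul, norm_e, mul_one, Complex.norm_real, Real.norm_eq_abs]
          exact Real.abs_sin_le_one _
        · rw [norm_smul, norm_e, mul_one, Complex.norm_real, Real.norm_eq_abs]
          exact Real.abs_sin_le_one _
    _ = 2 := by norm_num

lemma W_norm_sq (N : ℕ) :
    ‖W θ N‖ ^ (2:ℝ) = ∑ n ∈ Finset.range N, Real.sin ((n+1)*θ) ^ 2 := by
  rw [norm_sq_eq]
  rw [tsum_eq_sum (s := Finset.range N) (fun b hb => by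
    rw [Finset.mem_range] at hb
    simp [W_apply, w, hb, Real.zero_rpow (by norm_num : (2:ℝ) ≠ 0)])]
  apply Finset.sum_congr rfl
  intro n hn
  rw [Finset.mem_range] at hn
  simp only [W_apply, w, if_pos hn]
  rw [Complex.norm_real, Real.norm_eq_abs, show (2:ℝ) = ((2:ℕ):ℝ) by norm_num, Real.rpow_natCast, sq_abs]

lemma sum_sin_sq_ge (hθ0 : 0 < θ) (hθπ : θ < Real.pi) (N : ℕ) :
    (N:ℝ)/2 - 1/‖Complex.exp ((2*θ:ℝ)*Complex.I) - 1‖ ≤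
      ∑ n ∈ Finset.range N, Real.sin ((n+1)*θ) ^ 2 := by
  set x : ℂ := Complex.exp ((2*θ:ℝ)*Complex.I) with hx
  have hx1 : x ≠ 1 := by
    rw [hx, Ne, Complex.exp_eq_one_iff]
    push_neg
    intro k hk
    have him := congrArg Complex.im hk
    simp [Complex.mul_im] at him
    rcases le_or_gt k 0 with hk0 | hk0
    · have : (k:ℝ) ≤ 0 := by exact_mod_cast hk0
      nlinarith [Real.pi_pos]
    · have : (1:ℝ) ≤ (k:ℝ) := by exact_mod_cast hk0
      nlinarith [Real.pi_pos]
  have hxnorm : ‖x‖ = 1 := by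
    rw [hx]
    simpa using Complex.norm_exp_ofReal_mul_I (2*θ)
  have hxsub : 0 < ‖x - 1‖ := by
    rw [norm_pos_iff, sub_ne_zero]; exact hx1
  have hgeom : ‖∑ n ∈ Finset.range N, x^n‖ ≤ 2/‖x-1‖ := by
    rw [geom_sum_eq hx1]
    rw [norm_div]
    gcongr
    calc ‖x^N - 1‖ ≤ ‖x^N‖ + ‖(1:ℂ)‖ := norm_sub_le _ _
      _ = 2 := by rw [norm_pow, hxnorm]; norm_num
  have hre : ∀ m : ℕ, Real.cos ((m:ℝ)*(2*θ)) = (x^m).re := by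
    intro m
    rw [hx, ← Complex.exp_nat_mul, ← Complex.exp_ofReal_mul_I_re]
    congr 2
    push_cast
    ring
  have hsin : ∀ n : ℕ, Real.sin ((n+1)*θ)^2 = 1/2 - (x^(n+1)).re/2 := by
    intro n
    have h1 := Real.cos_sq ((n+1)*θ)
    have h2 := Real.sin_sq_add_cos_sq ((n+1)*θ)
    have h3 := hre (n+1)
    have h4 : ((n+1:ℕ):ℝ)*(2*θ) = 2*((n+1)*θ) := by push_cast; ring
    rw [h4] at h3
    rw [← h3] at *
    linarith
  have hS : |(∑ n ∈ Finset.range N, x^(n+1)).re| ≤ 2/‖x-1‖ := by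
    have h5 : ∑ n ∈ Finset.range N, x^(n+1) = x * ∑ n ∈ Finset.range N, x^n := by
      rw [Finset.mul_sum]
      exact Finset.sum_congr rfl (fun n _ => by ring)
    calc |(∑ n ∈ Finset.range N, x^(n+1)).re| ≤ ‖∑ n ∈ Finset.range N, x^(n+1)‖ :=
          Complex.abs_re_le_norm _
      _ = ‖x‖ * ‖∑ n ∈ Finset.range N, x^n‖ := by rw [h5, norm_mul]
      _ ≤ 2/‖x-1‖ := by rw [hxnorm, one_mul]; exact hgeom
  have hsum : ∑ n ∈ Finset.range N, Real.sin ((n+1)*θ)^2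
      = (N:ℝ)/2 - (∑ n ∈ Finset.range N, x^(n+1)).re/2 := by
    rw [Complex.re_sum]
    rw [Finset.sum_congr rfl (fun n _ => hsin n), Finset.sum_sub_distrib]
    simp [Finset.sum_div]
    ring
  rw [hsum]
  have := abs_le.mp hS
  have h6 : 2/‖x-1‖ = 2*(1/‖x-1‖) := by ring
  linarith [this.1, this.2]

end Weyl

section Main
variable (H : L2 →L[ℂ] L2)
    (hH0 : ∀ u : L2, (H u : ∀ _ : ℕ, ℂ) 0 = (u : ∀ _ : ℕ, ℂ) 1)
    (hHn : ∀ u : L2, ∀ n : ℕ,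
      (H u : ∀ _ : ℕ, ℂ) (n + 1) = (u : ∀ _ : ℕ, ℂ) (n + 2) + (u : ∀ _ : ℕ, ℂ) n)

include hH0 hHn

lemma Ioo_subset_spectrum {t : ℝ} (ht : t ∈ Set.Ioo (-2:ℝ) 2) :
    (t:ℂ) ∈ spectrum ℂ H := by
  obtain ⟨ht1, ht2⟩ := ht
  set θ := Real.arccos (t/2) with hθ
  have hc : Real.cos θ = t/2 := Real.cos_arccos (by linarith) (by linarith)
  have hθ0 : 0 < θ := Real.arccos_pos.mpr (by linarith)
  have hθπ : θ < Real.pi := by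
    refine lt_of_le_of_ne (Real.arccos_le_pi _) (fun h => ?_)
    rw [h, Real.cos_pi] at hc
    linarith
  have ht' : t = 2 * Real.cos θ := by rw [hc]; ring
  by_contra hmem
  rw [spectrum.notMem_iff] at hmem
  obtain ⟨U, hU⟩ := hmem
  set R : L2 →L[ℂ] L2 := ↑U⁻¹ with hR
  have hinv : ∀ u : L2, R ((algebraMap ℂ (L2 →L[ℂ] L2) t - H) u) = u := by
    intro u
    have h1 : (↑U⁻¹ * ↑U : L2 →L[ℂ] L2) = 1 := by
      rw [← Units.val_mul, inv_mul_cancel]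
      rfl
    calc R ((algebraMap ℂ (L2 →L[ℂ] L2) t - H) u)
        = (↑U⁻¹ * ↑U : L2 →L[ℂ] L2) u := by rw [hU]; rfl
      _ = u := by rw [h1]; rfl
  have hbound : ∀ M : ℕ, ‖W θ (M+1)‖ ≤ ‖R‖ * 2 := by
    intro M
    have h1 : (algebraMap ℂ (L2 →L[ℂ] L2) t - H) (W θ (M+1))
        = ((2 * Real.cos θ : ℝ) : ℂ) • W θ (M+1) - H (W θ (M+1)) := by
      rw [ContinuousLinearMap.sub_apply, Algebra.algebraMap_eq_smul_one,
        ContinuousLinearMap.smul_apply, ContinuousLinearMap.one_apply]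
      rw [show ((2 * Real.cos θ : ℝ) : ℂ) = (t:ℂ) by rw [← ht']]
    calc ‖W θ (M+1)‖ = ‖R ((algebraMap ℂ (L2 →L[ℂ] L2) t - H) (W θ (M+1)))‖ := by
          rw [hinv]
      _ ≤ ‖R‖ * ‖(algebraMap ℂ (L2 →L[ℂ] L2) t - H) (W θ (M+1))‖ :=
          R.le_opNorm _
      _ ≤ ‖R‖ * 2 := by
          apply mul_le_mul_of_nonneg_left _ (norm_nonneg R)
          rw [h1]
          exact resid_norm_le θ H hH0 hHn M
  set C := 1/‖Complex.exp (2*(θ:ℂ)*Complex.I) - 1‖ with hC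
  set K := ‖R‖ * 2 with hK
  have hK0 : 0 ≤ K := by positivity
  obtain ⟨M, hM⟩ := exists_nat_gt (2*(K^2 + C))
  have hcontr : (M+1:ℝ)/2 - C ≤ K^2 := by
    have h2 : ‖W θ (M+1)‖ ^ (2:ℝ) ≤ K ^ (2:ℝ) :=
      Real.rpow_le_rpow (norm_nonneg _) (hbound M) (by norm_num)
    have h3 := W_norm_sq θ (M+1)
    have h4 := sum_sin_sq_ge θ hθ0 hθπ (M+1)
    rw [show ((2:ℝ)) = ((2:ℕ):ℝ) by norm_num, Real.rpow_natCast, Real.rpow_natCast] at h2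
    rw [show ((2:ℝ)) = ((2:ℕ):ℝ) by norm_num, Real.rpow_natCast] at h3
    rw [h3] at h2
    push_cast at h4 ⊢
    linarith
  linarith

lemma Icc_subset_spectrum :
    (fun t : ℝ => (t : ℂ)) '' Set.Icc (-2:ℝ) 2 ⊆ spectrum ℂ H := by
  have h1 : (fun t : ℝ => (t : ℂ)) '' Set.Ioo (-2:ℝ) 2 ⊆ spectrum ℂ H := by
    rintro z ⟨t, ht, rfl⟩
    exact Ioo_subset_spectrum H hH0 hHn ht
  have hce : Topology.IsClosedEmbedding ((↑) : ℝ → ℂ) := Complex.isometry_ofReal.isClosedEmbedding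
  have h2 : (fun t : ℝ => (t : ℂ)) '' Set.Icc (-2:ℝ) 2
      ⊆ closure ((fun t : ℝ => (t : ℂ)) '' Set.Ioo (-2:ℝ) 2) := by
    rw [hce.closure_image_eq]
    apply Set.image_mono
    rw [closure_Ioo (by norm_num : (-2:ℝ) ≠ 2)]
  refine h2.trans ?_
  rw [IsClosed.closure_subset_iff (spectrum.isClosed _)]
  exact h1

set_option synthInstance.maxHeartbeats 1000000 in
lemma spectrum_subset_Icc :
    spectrum ℂ H ⊆ (fun t : ℝ => (t : ℂ)) '' Set.Icc (-2:ℝ) 2 := by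
  haveI : Nontrivial L2 :=
    ⟨0, e 0, fun h => by simpa [norm_e] using congrArg norm h⟩
  intro z hz
  have hsa := H_selfAdjoint H hH0 hHn
  have hre : z = (z.re : ℂ) := hsa.mem_spectrum_eq_re hz
  have hnorm : ‖z‖ ≤ ‖H‖ := spectrum.norm_le_norm_of_mem hz
  have hH2 : ‖H‖ ≤ 2 :=
    ContinuousLinearMap.opNorm_le_bound H (by norm_num) (norm_H_le H hH0 hHn)
  refine ⟨z.re, ?_, hre.symm⟩
  have habs : |z.re| ≤ 2 := le_trans (le_trans (Complex.abs_re_le_norm z) hnorm) hH2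
  rw [Set.mem_Icc]
  constructor <;> [linarith [abs_le.mp habs |>.1]; linarith [abs_le.mp habs |>.2]]

end Main

end Stmt4Aux

open Stmt4Aux in
/-- The spectrum of the half-line Dirichlet Laplacian `h₊` on ℓ²(ℕ) is exactly `[-2,2]`,
and `h₊` has no eigenvalues. -/
theorem stmt4 (H : L2 →L[ℂ] L2)
    (hH0 : ∀ u : L2, (H u : ∀ _ : ℕ, ℂ) 0 = (u : ∀ _ : ℕ, ℂ) 1)
    (hHn : ∀ u : L2, ∀ n : ℕ,
      (H u : ∀ _ : ℕ, ℂ) (n + 1) = (u : ∀ _ : ℕ, ℂ) (n + 2) + (u : ∀ _ : ℕ, ℂ) n) :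
    spectrum ℂ H = (fun t : ℝ => (t : ℂ)) '' Set.Icc (-2 : ℝ) 2 ∧
    ∀ (z : ℂ) (u : L2), H u = z • u → u = 0 := by
  refine ⟨Set.Subset.antisymm (spectrum_subset_Icc H hH0 hHn) (Icc_subset_spectrum H hH0 hHn),
    fun z u h => no_eigen H hH0 hHn z u h⟩
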